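/- With probability at least 1 − 1/n^{31}, every j ∈ {1, …, η} satisfies Δ(G_j) ≤ (1 + ε)·Δ', where Δ(G_j) denotes the maximum degree of G_j. -/

import Mathlib

open MeasureTheory ProbabilityTheory

lemma poly_aux {ε : ℝ} (hε0 : 0 < ε) (hε1 : ε ≤ 1) :
    Real.exp (3 * ε / 4) ≤ 1 + 3 * ε / 4 + 3 * ε ^ 2 / 4 - (34 / 100) * ε ^ 4 := by
  have hx0 : (0:ℝ) ≤ 3 * ε / 4 := by linarith
  have hx1 : 3 * ε / 4 ≤ 1 := by linarith
  have h := Real.exp_bound' hx0 hx1 (n := 5) (by norm_num)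
  rw [Finset.sum_range_succ, Finset.sum_range_succ, Finset.sum_range_succ,
    Finset.sum_range_succ, Finset.sum_range_one] at h
  norm_num [Nat.factorial] at h
  have h3 : ε ^ 3 ≤ ε ^ 2 := pow_le_pow_of_le_one hε0.le hε1 (by norm_num)
  have h4 : ε ^ 4 ≤ ε ^ 2 := pow_le_pow_of_le_one hε0.le hε1 (by norm_num)
  have h5 : ε ^ 5 ≤ ε ^ 2 := pow_le_pow_of_le_one hε0.le hε1 (by norm_num)
  nlinarith [sq_nonneg ε]

set_option maxHeartbeats 1000000 in
/-- Let `G` be a finite simple graph on `n ≥ 3` vertices with maximum degree at most `Δ`,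
`100·ln n ≤ Δ' ≤ Δ ≤ n`, `η := ⌈Δ/Δ'⌉`, and let `(J_e)_{e ∈ E}` be independent random
variables, each uniform on `{1, …, η}`; `G_j` is the spanning subgraph of `G` with edge set
`{e ∈ E : J_e = j}`. If additionally `0 < ε ≤ 1` and `Δ' ≥ 100·ln(n)/ε⁴`, then with
probability at least `1 − 1/n^{31}`, every `j ∈ {1, …, η}` satisfies `Δ(G_j) ≤ (1 + ε)·Δ'`. -/
theorem stmt_13 {V : Type*} [Fintype V] [DecidableEq V]
    (G : SimpleGraph V) [DecidableRel G.Adj]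
    {Ω : Type*} [MeasurableSpace Ω] (μ : Measure Ω) [IsProbabilityMeasure μ]
    (Δ Δ' : ℝ) (n : ℕ) (hn : n = Fintype.card V) (hn3 : 3 ≤ n)
    (hdeg : ∀ u : V, (G.degree u : ℝ) ≤ Δ)
    (hΔ'1 : 100 * Real.log n ≤ Δ') (hΔ'2 : Δ' ≤ Δ) (hΔn : Δ ≤ (n : ℝ))
    (ε : ℝ) (hε0 : 0 < ε) (hε1 : ε ≤ 1)
    (hΔ'ε : Δ' ≥ 100 * Real.log n / ε ^ 4)
    (η : ℕ) (hη : η = ⌈Δ / Δ'⌉₊)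
    (J : Sym2 V → Ω → ℕ)
    (hmeas : ∀ e, Measurable (J e))
    (hindep : iIndepFun
      (fun e : G.edgeSet => J e) μ)
    (hdist : ∀ e ∈ G.edgeSet, ∀ j ∈ Finset.Icc 1 η,
      μ {ω | J e ω = j} = (η : ENNReal)⁻¹) :
    ENNReal.ofReal (1 - 1 / (n : ℝ) ^ 31) ≤
      μ {ω | ∀ j ∈ Finset.Icc 1 η, ∀ u : V,
        (({e | e ∈ G.incidenceSet u ∧ J e ω = j}.ncard : ℝ)) ≤ (1 + ε) * Δ'} := by
  classical
  set k : ℝ := (1 + ε) * Δ' with hk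
  set t : ℝ := 3 * ε / 4 with ht
  have hn0 : (0:ℝ) < n := by positivity
  have hlogn : 1 ≤ Real.log n := by
    rw [Real.le_log_iff_exp_le hn0]
    calc Real.exp 1 ≤ 2.7182818286 := Real.exp_one_lt_d9.le
      _ ≤ 3 := by norm_num
      _ ≤ (n:ℝ) := by exact_mod_cast hn3
  have hΔ'pos : 0 < Δ' := lt_of_lt_of_le (by linarith) hΔ'1
  have hΔpos : 0 < Δ := lt_of_lt_of_le hΔ'pos hΔ'2
  have hη1 : 1 ≤ η := by
    rw [hη]; exact Nat.one_le_ceil_iff.mpr (by positivity)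
  have hηΔ : Δ / Δ' ≤ (η:ℝ) := hη ▸ Nat.le_ceil _
  have hΔη : Δ ≤ η * Δ' := by
    rw [div_le_iff₀ hΔ'pos] at hηΔ; linarith
  have hηn : η ≤ n := by
    rw [hη, Nat.ceil_le]
    calc Δ / Δ' ≤ Δ / 1 := by gcongr; linarith
      _ ≤ (n:ℝ) := by simpa using hΔn
  have hηpos : (0:ℝ) < η := by exact_mod_cast hη1
  set p : ℝ := (η:ℝ)⁻¹ with hp
  have ht0 : 0 ≤ t := by rw [ht]; linarith
  have het1 : 0 ≤ Real.exp t - 1 := by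
    have := Real.one_le_exp ht0; linarith
  -- the per-pair Chernoff bound
  have key : ∀ j ∈ Finset.Icc 1 η, ∀ u : V,
      μ {ω | k < (({e | e ∈ G.incidenceSet u ∧ J e ω = j}.ncard : ℝ))}
        ≤ ENNReal.ofReal (((n:ℝ) ^ 34)⁻¹) := by
    intro j hj u
    set X : G.edgeSet → Ω → ℝ :=
      fun e => (fun m : ℕ => if m = j then (1:ℝ) else 0) ∘ (J e.1) with hX
    have hg : ∀ _ : G.edgeSet, Measurable (fun m : ℕ => if m = j then (1:ℝ) else 0) :=
      fun _ => measurable_from_top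
    have hXmeas : ∀ e, Measurable (X e) := fun e => (hg e).comp (hmeas e.1)
    have hXindep : iIndepFun X μ := hindep.comp _ hg
    set s : Finset G.edgeSet := (G.incidenceFinset u).subtype (· ∈ G.edgeSet) with hs
    have hsub : ∀ e ∈ G.incidenceFinset u, e ∈ G.edgeSet := by
      intro e he
      rw [SimpleGraph.mem_incidenceFinset] at he
      exact G.incidenceSet_subset u he
    -- counting identity
    have hcount : ∀ ω, (({e | e ∈ G.incidenceSet u ∧ J e ω = j}.ncard : ℝ))
        = (∑ e ∈ s, X e) ω := by
      intro ω
      have h1 : {e | e ∈ G.incidenceSet u ∧ J e ω = j}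
          = ↑((G.incidenceFinset u).filter (fun e => J e ω = j)) := by
        ext e
        simp [SimpleGraph.mem_incidenceFinset]
      rw [h1, Set.ncard_coe_finset, Finset.card_filter, Finset.sum_apply]
      push_cast
      exact (Finset.sum_subtype_of_mem (fun e => if J e ω = j then (1:ℝ) else 0) hsub).symm
    -- integrability and mgf of a single indicator
    have hA : ∀ e : G.edgeSet, MeasurableSet {ω | J e.1 ω = j} :=
      fun e => (hmeas e.1) (measurableSet_singleton j)
    have hdecomp : ∀ e : G.edgeSet,
        (fun ω => Real.exp (t * X e ω)) =
          fun ω => Set.indicator {ω | J e.1 ω = j} (fun _ => Real.exp t - 1) ω + 1 := by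
      intro e; funext ω
      by_cases h : J e.1 ω = j
      · simp [hX, h, Set.indicator_of_mem, Set.mem_setOf_eq, mul_one]
      · simp [hX, h, Set.indicator_of_notMem, Set.mem_setOf_eq]
    have hint : ∀ e : G.edgeSet, Integrable (fun ω => Real.exp (t * X e ω)) μ := by
      intro e; rw [hdecomp e]
      exact ((integrable_const _).indicator (hA e)).add (integrable_const 1)
    have hmgf1 : ∀ e ∈ s, mgf (X e) μ t = 1 + p * (Real.exp t - 1) := by
      intro e _
      have hμA : μ {ω | J e.1 ω = j} = (η : ENNReal)⁻¹ := hdist e.1 e.2 j hj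
      rw [mgf, hdecomp e,
        integral_add ((integrable_const _).indicator (hA e)) (integrable_const 1),
        integral_indicator_const _ (hA e), integral_const, measureReal_def, measureReal_def, hμA]
      simp only [measure_univ, ENNReal.toReal_one, one_smul, smul_eq_mul]
      rw [ENNReal.toReal_inv, ENNReal.toReal_natCast]
      ring
    -- degree bound
    have hcard : (s.card : ℝ) ≤ Δ := by
      have h1 : s.card = (G.incidenceFinset u).card := by
        rw [hs]
        rw [Finset.card_eq_sum_ones, Finset.card_eq_sum_ones,
          Finset.sum_subtype_of_mem (fun _ => 1) hsub]
      rw [h1, SimpleGraph.card_incidenceFinset_eq_degree]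
      exact hdeg u
    have hcp : (s.card : ℝ) * p ≤ Δ' := by
      have h2 : (s.card : ℝ) * p ≤ Δ * p :=
        mul_le_mul_of_nonneg_right hcard (by positivity)
      have h3 : Δ * p ≤ Δ' := by
        rw [hp, ← div_eq_mul_inv, div_le_iff₀ hηpos]
        linarith [hΔη]
      linarith
    -- mgf bound
    have hmgfS : mgf (∑ e ∈ s, X e) μ t ≤ Real.exp (Δ' * (Real.exp t - 1)) := by
      rw [hXindep.mgf_sum hXmeas s]
      have hfac : ∀ e ∈ s, mgf (X e) μ t ≤ Real.exp (p * (Real.exp t - 1)) := by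
        intro e he
        rw [hmgf1 e he]
        have := Real.add_one_le_exp (p * (Real.exp t - 1))
        linarith
      calc ∏ e ∈ s, mgf (X e) μ t ≤ ∏ _e ∈ s, Real.exp (p * (Real.exp t - 1)) :=
            Finset.prod_le_prod (fun e _ => mgf_nonneg) hfac
        _ = Real.exp ((s.card : ℝ) * (p * (Real.exp t - 1))) := by
            rw [Finset.prod_const, ← Real.exp_nat_mul]
        _ ≤ Real.exp (Δ' * (Real.exp t - 1)) := by
            apply Real.exp_le_exp.mpr
            calc (s.card : ℝ) * (p * (Real.exp t - 1)) = ((s.card : ℝ) * p) * (Real.exp t - 1) := by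
                  ring
              _ ≤ Δ' * (Real.exp t - 1) := mul_le_mul_of_nonneg_right hcp het1
    -- Chernoff
    have hint_sum : Integrable (fun ω => Real.exp (t * (∑ e ∈ s, X e) ω)) μ :=
      hXindep.integrable_exp_mul_sum hXmeas (fun e _ => hint e)
    have hcher := measure_ge_le_exp_mul_mgf (μ := μ) (X := ∑ e ∈ s, X e) k ht0 hint_sum
    have hbound : (μ {ω | k ≤ (∑ e ∈ s, X e) ω}).toReal ≤ ((n:ℝ) ^ 34)⁻¹ := by
      refine hcher.trans ?_
      have hexpfin : Real.exp (-t * k) * mgf (∑ e ∈ s, X e) μ t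
          ≤ Real.exp (Δ' * (Real.exp t - 1) - t * k) :=
        calc Real.exp (-t * k) * mgf (∑ e ∈ s, X e) μ t
            ≤ Real.exp (-t * k) * Real.exp (Δ' * (Real.exp t - 1)) :=
              mul_le_mul_of_nonneg_left hmgfS (Real.exp_pos _).le
          _ = Real.exp (Δ' * (Real.exp t - 1) - t * k) := by
              rw [← Real.exp_add]; ring_nf
      have hneg : Δ' * (Real.exp t - 1) - t * k ≤ -(34 * Real.log n) := by
        have hpoly := poly_aux hε0 hε1
        have hpoly' : Real.exp t - 1 - (1 + ε) * t ≤ -(34/100 * ε^4) := by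
          rw [ht]; nlinarith [hpoly]
        have h340 : 34 * Real.log n ≤ 34/100 * ε^4 * Δ' := by
          rw [ge_iff_le, div_le_iff₀ (by positivity : (0:ℝ) < ε^4)] at hΔ'ε
          nlinarith [hΔ'ε]
        have := mul_le_mul_of_nonneg_left hpoly' hΔ'pos.le
        rw [hk]
        nlinarith [this, h340]
      have hfin : Real.exp (-(34 * Real.log n)) = ((n:ℝ) ^ 34)⁻¹ := by
        rw [Real.exp_neg,
          show (34:ℝ) * Real.log n = Real.log ((n:ℝ) ^ (34:ℕ)) by rw [Real.log_pow]; norm_num,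
          Real.exp_log (by positivity)]
      calc Real.exp (-t * k) * mgf (∑ e ∈ s, X e) μ t
          ≤ Real.exp (Δ' * (Real.exp t - 1) - t * k) := hexpfin
        _ ≤ Real.exp (-(34 * Real.log n)) := Real.exp_le_exp.mpr hneg
        _ = ((n:ℝ) ^ 34)⁻¹ := hfin
    have hss : {ω | k < (({e | e ∈ G.incidenceSet u ∧ J e ω = j}.ncard : ℝ))}
        ⊆ {ω | k ≤ (∑ e ∈ s, X e) ω} := by
      intro ω hω
      exact le_of_lt (lt_of_lt_of_eq hω (hcount ω))
    refine (measure_mono hss).trans ?_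
    rw [← ENNReal.ofReal_toReal (measure_ne_top μ {ω | k ≤ (∑ e ∈ s, X e) ω})]
    exact ENNReal.ofReal_le_ofReal hbound
  -- union bound
  set Eset := {ω | ∀ j ∈ Finset.Icc 1 η, ∀ u : V,
      (({e | e ∈ G.incidenceSet u ∧ J e ω = j}.ncard : ℝ)) ≤ k} with hE
  have hsubc : Esetᶜ ⊆ ⋃ j ∈ Finset.Icc 1 η, ⋃ u : V,
      {ω | k < (({e | e ∈ G.incidenceSet u ∧ J e ω = j}.ncard : ℝ))} := by
    intro ω hω
    simp only [hE, Set.mem_compl_iff, Set.mem_setOf_eq, not_forall] at hω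
    obtain ⟨j, hj, u, hu⟩ := hω
    refine Set.mem_biUnion hj ?_
    exact Set.mem_iUnion.mpr ⟨u, not_le.mp hu⟩
  have hEc : μ Esetᶜ ≤ ENNReal.ofReal (1 / (n:ℝ) ^ 31) := by
    refine ((measure_mono hsubc).trans (measure_biUnion_finset_le _ _)).trans ?_
    have hstep : ∀ j ∈ Finset.Icc 1 η,
        μ (⋃ u : V, {ω | k < (({e | e ∈ G.incidenceSet u ∧ J e ω = j}.ncard : ℝ))})
          ≤ (n : ENNReal) * ENNReal.ofReal (((n:ℝ) ^ 34)⁻¹) := by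
      intro j hj
      refine (measure_iUnion_fintype_le _ _).trans ?_
      calc ∑ u : V, μ {ω | k < (({e | e ∈ G.incidenceSet u ∧ J e ω = j}.ncard : ℝ))}
          ≤ ∑ _u : V, ENNReal.ofReal (((n:ℝ) ^ 34)⁻¹) :=
            Finset.sum_le_sum (fun u _ => key j hj u)
        _ = (Fintype.card V : ENNReal) * ENNReal.ofReal (((n:ℝ) ^ 34)⁻¹) := by
            rw [Finset.sum_const, Finset.card_univ, nsmul_eq_mul]
        _ = (n : ENNReal) * ENNReal.ofReal (((n:ℝ) ^ 34)⁻¹) := by rw [hn]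
    refine (Finset.sum_le_sum hstep).trans ?_
    rw [Finset.sum_const, Nat.card_Icc, nsmul_eq_mul]
    simp only [Nat.add_sub_cancel]
    calc (η : ENNReal) * ((n : ENNReal) * ENNReal.ofReal (((n:ℝ) ^ 34)⁻¹))
        ≤ (n : ENNReal) * ((n : ENNReal) * ENNReal.ofReal (((n:ℝ) ^ 34)⁻¹)) :=
          mul_le_mul_left (by exact_mod_cast hηn : (η : ENNReal) ≤ (n : ENNReal)) _
      _ = ENNReal.ofReal ((n:ℝ) * ((n:ℝ) * ((n:ℝ) ^ 34)⁻¹)) := by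
          rw [ENNReal.ofReal_mul (by positivity), ENNReal.ofReal_mul (by positivity),
            ENNReal.ofReal_natCast]
      _ ≤ ENNReal.ofReal (1 / (n:ℝ) ^ 31) := by
          apply ENNReal.ofReal_le_ofReal
          have hv : (n:ℝ) * ((n:ℝ) * ((n:ℝ) ^ 34)⁻¹) = ((n:ℝ) ^ 32)⁻¹ := by
            field_simp
          rw [hv, one_div]
          apply inv_anti₀ (by positivity)
          exact pow_le_pow_right₀ (by linarith : (1:ℝ) ≤ n) (by norm_num)
  -- conclude
  have hx0 : (0:ℝ) ≤ 1 / (n:ℝ) ^ 31 := by positivity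
  have hx1 : 1 / (n:ℝ) ^ 31 ≤ 1 := by
    rw [div_le_one (by positivity)]
    exact one_le_pow₀ (by linarith : (1:ℝ) ≤ n)
  have hsum : ENNReal.ofReal (1 - 1 / (n:ℝ) ^ 31) + ENNReal.ofReal (1 / (n:ℝ) ^ 31) = 1 := by
    rw [← ENNReal.ofReal_add (by linarith) hx0]
    norm_num
  have hunion : (1:ENNReal) ≤ μ Eset + μ Esetᶜ := by
    rw [← measure_univ (μ := μ), ← Set.union_compl_self Eset]
    exact measure_union_le _ _
  calc ENNReal.ofReal (1 - 1 / (n:ℝ) ^ 31)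
      = 1 - ENNReal.ofReal (1 / (n:ℝ) ^ 31) := by
        rw [← hsum, ENNReal.add_sub_cancel_right ENNReal.ofReal_ne_top]
    _ ≤ 1 - μ Esetᶜ := tsub_le_tsub_left hEc 1
    _ ≤ μ Eset := tsub_le_iff_right.mpr hunion
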